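/- Let B > 0, k > 0, and 0 < A < k. The quadratic Q(p) = AB - 2Bkp + k²(A-k)p², whose leading coefficient k²(A-k) is negative, has exactly one positive root, given by p* = B/(k(k-A)) · (√(1 + (A/B)(k-A)) - 1), and moreover p* ∈ (0, 1]. -/

import Mathlib

theorem quadratic_unique_positive_root (A B k : ℝ)
    (hB : 0 < B) (hk : 0 < k) (hA0 : 0 < A) (hAk : A < k)
    (Q : ℝ → ℝ) (hQ : ∀ p, Q p = A*B - 2*B*k*p + k^2*(A-k)*p^2)
    (pstar : ℝ)
    (hp : pstar = B/(k*(k-A)) * (Real.sqrt (1 + (A/B)*(k-A)) - 1)) :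
    k^2*(A-k) < 0 ∧ Q pstar = 0 ∧ (∀ p : ℝ, 0 < p → Q p = 0 → p = pstar) ∧
    0 < pstar ∧ pstar ≤ 1 := by
  have hkA : 0 < k - A := by linarith
  have hc : 0 < k*(k-A) := mul_pos hk hkA
  set t : ℝ := Real.sqrt (1 + (A/B)*(k-A)) with ht
  have harg : (1:ℝ) < 1 + (A/B)*(k-A) := by
    have : 0 < (A/B)*(k-A) := mul_pos (div_pos hA0 hB) hkA
    linarith
  have ht2 : t^2 = 1 + (A/B)*(k-A) := Real.sq_sqrt (by linarith)
  have ht1 : 1 < t := by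
    nlinarith [Real.sqrt_nonneg (1 + (A/B)*(k-A)), ht2]
  have hpos : 0 < pstar := by
    rw [hp]
    exact mul_pos (div_pos hB hc) (by linarith)
  have hQ0 : Q pstar = 0 := by
    rw [hQ, hp]
    have hB' : B ≠ 0 := ne_of_gt hB
    have hc' : k*(k-A) ≠ 0 := ne_of_gt hc
    field_simp
    ring_nf
    linear_combination (B^2*(A - k)) * ht2 +
      (B*A*(k-A)*(A - k)) * (mul_inv_cancel₀ hB')
  have hle : pstar ≤ 1 := by
    have hy : (0:ℝ) ≤ 1 + A*(k-A)/(2*B) := by positivity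
    have hsq : (1 + (A/B)*(k-A)) ≤ (1 + A*(k-A)/(2*B))^2 := by
      have h0 : (1 + A*(k-A)/(2*B))^2 = 1 + (A/B)*(k-A) + (A*(k-A)/(2*B))^2 := by
        field_simp; ring
      nlinarith [sq_nonneg (A*(k-A)/(2*B))]
    have hty : t ≤ 1 + A*(k-A)/(2*B) := by
      calc t ≤ Real.sqrt ((1 + A*(k-A)/(2*B))^2) := Real.sqrt_le_sqrt hsq
        _ = _ := Real.sqrt_sq hy
    have hBt : B*(1 + A*(k-A)/(2*B)) = B + A*(k-A)/2 := by field_simp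
    have : pstar ≤ A/(2*k) := by
      rw [hp]
      rw [div_mul_eq_mul_div, div_le_div_iff₀ hc (by positivity)]
      have h1 : B * (t-1) ≤ A*(k-A)/2 := by
        have := mul_le_mul_of_nonneg_left hty hB.le
        rw [hBt] at this; linarith
      nlinarith
    have : A/(2*k) < 1 := by
      rw [div_lt_one (by positivity)]; linarith
    linarith
  refine ⟨by nlinarith, hQ0, ?_, hpos, hle⟩
  intro p hp0 hQp
  have e1 : A*B - 2*B*k*p + k^2*(A-k)*p^2 = 0 := by rw [← hQ]; exact hQp
  have e2 : A*B - 2*B*k*pstar + k^2*(A-k)*pstar^2 = 0 := by rw [← hQ]; exact hQ0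
  have hfac : (p - pstar) * (k^2*(A-k)*(p+pstar) - 2*B*k) = 0 := by
    linear_combination e1 - e2
  rcases mul_eq_zero.mp hfac with h | h
  · linarith [sub_eq_zero.mp h]
  · exfalso
    have hneg : k^2*(A-k)*(p+pstar) < 0 :=
      mul_neg_of_neg_of_pos (by nlinarith) (by linarith)
    linarith [mul_pos hB hk]
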